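/- arXiv:1805.04815 — 2 statements merged into one kernel-verified Lean document; each statement's English description precedes it below -/
import Mathlib

section
/- Let a ≤ b be reals with a ≤ 0 ≤ b, let v ∈ ℝ, and let M₁ ≥ 2·max(|a|,|b|)·|v| (with M₁ > 0). Then there exists u ∈ {0,1} such that ψ satisfies (−M₁·u + v·a ≤ ψ ≤ v·b + M₁·u) and (−M₁·(1−u) + v·b ≤ ψ ≤ v·a + M₁·(1−u)) if and only if ψ = v·c for some c with a ≤ c ≤ b. -/
lemma aux_stmt2 (a b v ψ : ℝ) (hab : a ≤ b) (h1 : v * a ≤ ψ) (h2 : ψ ≤ v * b) :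
    ∃ c : ℝ, a ≤ c ∧ c ≤ b ∧ ψ = v * c := by
  rcases lt_trichotomy v 0 with hv | hv | hv
  · have h3 : v * b ≤ v * a := mul_le_mul_of_nonpos_left hab hv.le
    exact ⟨a, le_refl a, hab, le_antisymm (h2.trans h3) h1⟩
  · exact ⟨a, le_refl a, hab, by subst hv; simp at h1 h2 ⊢; linarith⟩
  · refine ⟨ψ / v, ?_, ?_, by field_simp⟩
    · rw [le_div_iff₀ hv]; nlinarith
    · rw [div_le_iff₀ hv]; nlinarith

theorem stmt_2 (a b v ψ M₁ : ℝ) (hab : a ≤ b) (ha : a ≤ 0) (hb : 0 ≤ b)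
    (hM₁pos : 0 < M₁) (hM₁ : 2 * max |a| |b| * |v| ≤ M₁) :
    (∃ u : ℝ, (u = 0 ∨ u = 1) ∧
      (-(M₁ * u) + v * a ≤ ψ ∧ ψ ≤ v * b + M₁ * u) ∧
      (-(M₁ * (1 - u)) + v * b ≤ ψ ∧ ψ ≤ v * a + M₁ * (1 - u))) ↔
    (∃ c : ℝ, a ≤ c ∧ c ≤ b ∧ ψ = v * c) := by
  constructor
  · rintro ⟨u, hu | hu, ⟨h1, h2⟩, ⟨h3, h4⟩⟩
    · subst hu
      exact aux_stmt2 a b v ψ hab (by linarith) (by linarith)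
    · subst hu
      obtain ⟨c, hc1, hc2, hc3⟩ := aux_stmt2 (-b) (-a) (-v) ψ (by linarith)
        (by nlinarith) (by nlinarith)
      exact ⟨-c, by linarith, by linarith, by rw [hc3]; ring⟩
  · rintro ⟨c, hc1, hc2, rfl⟩
    have hma : |a| ≤ max |a| |b| := le_max_left _ _
    have hmb : |b| ≤ max |a| |b| := le_max_right _ _
    have haa : -a ≤ |a| := neg_le_abs a
    have hbb : b ≤ |b| := le_abs_self b
    have key : |v| * (b - a) ≤ M₁ := by
      calc |v| * (b - a) ≤ |v| * (|b| + |a|) := by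
            apply mul_le_mul_of_nonneg_left _ (abs_nonneg v); linarith
        _ ≤ |v| * (2 * max |a| |b|) := by
            apply mul_le_mul_of_nonneg_left _ (abs_nonneg v); linarith
        _ = 2 * max |a| |b| * |v| := by ring
        _ ≤ M₁ := hM₁
    rcases le_or_gt 0 v with hv | hv
    · refine ⟨0, Or.inl rfl, ⟨?_, ?_⟩, ⟨?_, ?_⟩⟩
      · nlinarith
      · nlinarith
      · have : v * (b - c) ≤ |v| * (b - a) := by
          have := le_abs_self v
          nlinarith
        nlinarith
      · have : v * (c - a) ≤ |v| * (b - a) := by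
          have := le_abs_self v
          nlinarith
        nlinarith
    · refine ⟨1, Or.inr rfl, ⟨?_, ?_⟩, ⟨?_, ?_⟩⟩
      · have : (-v) * (c - a) ≤ |v| * (b - a) := by
          have : -v ≤ |v| := neg_le_abs v
          nlinarith
        nlinarith
      · have : (-v) * (b - c) ≤ |v| * (b - a) := by
          have : -v ≤ |v| := neg_le_abs v
          nlinarith
        nlinarith
      · nlinarith
      · nlinarith
end

section
/- If at some iteration of the column-and-constraint generation algorithm the realization z* produced by the subproblem already belongs to the enumerated set Z_q of the master problem, then the master problem value LB equals the upper bound UB, and the algorithm terminates with an optimal solution of the full problem. -/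
theorem stmt_10 {α ζ : Type*} (X : Set α) (f g : α → ℝ) (φ : ζ → ℝ)
    (Z Zq : Finset ζ) (hZq : Zq ⊆ Z)
    (xstar : α) (hx : xstar ∈ X)
    (hmfeas : ∀ z ∈ Zq, g xstar ≤ φ z)
    (hmopt : ∀ x ∈ X, (∀ z ∈ Zq, g x ≤ φ z) → f xstar ≤ f x)
    (zstar : ζ) (hzZ : zstar ∈ Z)
    (hzmin : ∀ z ∈ Z, φ zstar ≤ φ z)
    (hrep : zstar ∈ Zq) :
    IsLeast {v : ℝ | ∃ x ∈ X, (∀ z ∈ Z, g x ≤ φ z) ∧ v = f x} (f xstar) := by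
  constructor
  · exact ⟨xstar, hx, fun z hz => (hmfeas zstar hrep).trans (hzmin z hz), rfl⟩
  · rintro v ⟨x, hxX, hfeas, rfl⟩
    exact hmopt x hxX fun z hz => hfeas z (hZq hz)
end
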